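/- Along discrete solutions the differential of the action sum reduces to boundary one-forms: if q = (q_0,…,q_N) ∈ E^{N+1} satisfies the discrete Euler–Lagrange equations, then for every variation δ ∈ E^{N+1} (not required to vanish at the endpoints), d/dε|_{ε=0} 𝔊_d(q + εδ) = D₁L_0(q_0, q_1)(δ_0) + D₂L_{N−1}(q_{N−1}, q_N)(δ_N), i.e. the differential of the restricted action is the sum of the left boundary one-form Θ⁻ at (q_0,q_1) and the right boundary one-form Θ⁺ at (q_{N−1},q_N). -/

import Mathlib

/-- Partial Fréchet derivative of a discrete Lagrangian `L : E × E → ℝ` in its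
first argument, evaluated at the point `(x, y)`. -/
noncomputable def D1 {E : Type*} [NormedAddCommGroup E] [NormedSpace ℝ E]
    (L : E × E → ℝ) (x y : E) : E →L[ℝ] ℝ :=
  fderiv ℝ (fun x' => L (x', y)) x

/-- Partial Fréchet derivative of a discrete Lagrangian `L : E × E → ℝ` in its
second argument, evaluated at the point `(x, y)`. -/
noncomputable def D2 {E : Type*} [NormedAddCommGroup E] [NormedSpace ℝ E]
    (L : E × E → ℝ) (x y : E) : E →L[ℝ] ℝ :=
  fderiv ℝ (fun y' => L (x, y')) y

lemma key_hasDerivAt {E : Type*} [NormedAddCommGroup E] [NormedSpace ℝ E]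
    (L : E × E → ℝ) (hL : ContDiff ℝ 1 L) (x y u v : E) :
    HasDerivAt (fun ε : ℝ => L (x + ε • u, y + ε • v))
      (D1 L x y u + D2 L x y v) 0 := by
  have hD : HasFDerivAt L (fderiv ℝ L (x, y)) (x, y) :=
    (hL.differentiable one_ne_zero (x, y)).hasFDerivAt
  have hγ : HasDerivAt (fun ε : ℝ => ((x + ε • u, y + ε • v) : E × E)) ((u, v)) 0 := by
    have h1 : HasDerivAt (fun ε : ℝ => ε • ((u, v) : E × E)) ((u, v)) 0 := by
      simpa using (hasDerivAt_id (0 : ℝ)).smul_const ((u, v) : E × E)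
    have h2 := h1.const_add ((x, y) : E × E)
    exact h2
  have hD' : HasFDerivAt L (fderiv ℝ L (x, y)) ((x + (0:ℝ) • u, y + (0:ℝ) • v)) := by
    simpa using hD
  have hcomp := hD'.comp_hasDerivAt 0 hγ
  have hd1 : D1 L x y u = fderiv ℝ L (x, y) (u, 0) := by
    have h : HasFDerivAt (fun x' => L (x', y))
        ((fderiv ℝ L (x, y)).comp (ContinuousLinearMap.inl ℝ E E)) x :=
      hD.comp x (hasFDerivAt_prodMk_left x y)
    rw [D1, h.fderiv]; rfl
  have hd2 : D2 L x y v = fderiv ℝ L (x, y) (0, v) := by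
    have h : HasFDerivAt (fun y' => L (x, y'))
        ((fderiv ℝ L (x, y)).comp (ContinuousLinearMap.inr ℝ E E)) y :=
      hD.comp y (hasFDerivAt_prodMk_right x y)
    rw [D2, h.fderiv]; rfl
  have : fderiv ℝ L (x, y) (u, v) = D1 L x y u + D2 L x y v := by
    rw [hd1, hd2, ← map_add]
    norm_num
  rw [← this]
  exact hcomp

/-- Along discrete solutions the differential of the action sum reduces to the
boundary one-forms: if `q` satisfies the discrete Euler–Lagrange equations, then
for every variation `δ` (not required to vanish at the endpoints) the first
variation of the action sum equals `Θ⁻(q_0,q_1)(δ_0) + Θ⁺(q_{N-1},q_N)(δ_N)`. -/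
theorem discrete_action_differential_on_solutions
    {E : Type*} [NormedAddCommGroup E] [NormedSpace ℝ E] [FiniteDimensional ℝ E]
    (N : ℕ) (hN : 2 ≤ N) (L : ℕ → E × E → ℝ)
    (hL : ∀ k < N, ContDiff ℝ 1 (L k))
    (q : ℕ → E)
    (hDEL : ∀ k, 1 ≤ k → k < N →
        D1 (L k) (q k) (q (k + 1)) + D2 (L (k - 1)) (q (k - 1)) (q k) = 0) :
    ∀ δ : ℕ → E,
      deriv (fun ε : ℝ =>
          ∑ k ∈ Finset.range N, L k (q k + ε • δ k, q (k + 1) + ε • δ (k + 1))) 0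
        = D1 (L 0) (q 0) (q 1) (δ 0) + D2 (L (N - 1)) (q (N - 1)) (q N) (δ N) := by
  intro δ
  have hderiv : HasDerivAt (fun ε : ℝ =>
      ∑ k ∈ Finset.range N, L k (q k + ε • δ k, q (k + 1) + ε • δ (k + 1)))
      (∑ k ∈ Finset.range N,
        (D1 (L k) (q k) (q (k + 1)) (δ k) + D2 (L k) (q k) (q (k + 1)) (δ (k + 1)))) 0 :=
    HasDerivAt.fun_sum fun k hk =>
      key_hasDerivAt _ (hL k (Finset.mem_range.mp hk)) _ _ _ _
  rw [hderiv.deriv]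
  obtain ⟨M, rfl⟩ : ∃ M, N = M + 1 := ⟨N - 1, by omega⟩
  have hM : 1 ≤ M := by omega
  set a := fun k => D1 (L k) (q k) (q (k + 1)) (δ k) with ha
  set b := fun k => D2 (L k) (q k) (q (k + 1)) (δ (k + 1)) with hb
  have hsplit : ∑ k ∈ Finset.range (M + 1), (a k + b k)
      = (a 0 + ∑ k ∈ Finset.range M, a (k + 1))
        + (∑ k ∈ Finset.range M, b k + b M) := by
    rw [Finset.sum_add_distrib, Finset.sum_range_succ' a, Finset.sum_range_succ b]
    ring
  rw [hsplit]
  have hzero : ∀ k ∈ Finset.range M, a (k + 1) + b k = 0 := by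
    intro k hk
    have hk' := Finset.mem_range.mp hk
    have h := hDEL (k + 1) (by omega) (by omega)
    have := congrArg (fun (T : E →L[ℝ] ℝ) => T (δ (k + 1))) h
    simpa [ha, hb] using this
  have hsum0 : ∑ k ∈ Finset.range M, a (k + 1) + ∑ k ∈ Finset.range M, b k = 0 := by
    rw [← Finset.sum_add_distrib]
    exact Finset.sum_eq_zero hzero
  have hfin : a 0 = D1 (L 0) (q 0) (q 1) (δ 0) := rfl
  have hfin2 : b M = D2 (L (M + 1 - 1)) (q (M + 1 - 1)) (q (M + 1)) (δ (M + 1)) := by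
    simp [hb]
  linarith [hsum0]
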